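/- Let (p, l) be an independent affine-normalized realization of an incidence structure S = (P, L, I). Let i₁, i₂ ∈ P be distinct with p i₁ ≠ p i₂, and let m ∈ ℝ² satisfy ⟪p i₁, m⟫ = -1 and ⟪p i₂, m⟫ = -1 (m is the affine-normalized coordinate vector of the line through the two points), and suppose m ≠ l j for every j ∈ L. Let S' = (P, L', I') be the incidence structure obtained by adjoining a new line j₀ to L with incidences (i₁, j₀) and (i₂, j₀), and extend l by setting l j₀ = m. Then the resulting affine-normalized realization of S' is independent. -/

import Mathlib

open Matrix

/-- adjoining to an independent affine-normalized realization a new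
line `m` through two distinct points `i₁, i₂` (a line not already present),
with the two incidences `(i₁, j₀)` and `(i₂, j₀)`, yields an independent
realization. The extended line set is `Option L`, with `none` the new line `j₀`
realized by `m`. -/
theorem line_extension_preserves_independence
    {P L : Type*} [Fintype P] [Fintype L] (I : Set (P × L))
    (p : P → Fin 2 → ℝ) (l : L → Fin 2 → ℝ)
    (hreal : ∀ ij ∈ I, p ij.1 ⬝ᵥ l ij.2 = -1)
    (hindep : ∀ ω : P × L → ℝ, (∀ ij ∉ I, ω ij = 0) →
      (∀ j, ∑ i, ω (i, j) • p i = 0) → (∀ i, ∑ j, ω (i, j) • l j = 0) → ω = 0)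
    (i₁ i₂ : P) (hne : i₁ ≠ i₂) (hpne : p i₁ ≠ p i₂)
    (m : Fin 2 → ℝ) (hm1 : p i₁ ⬝ᵥ m = -1) (hm2 : p i₂ ⬝ᵥ m = -1)
    (hmnew : ∀ j, m ≠ l j) :
    ∀ ω : P × Option L → ℝ,
      (∀ ij ∉ ({ij : P × Option L | ∃ q ∈ I, ij = (q.1, some q.2)} ∪
        {(i₁, (none : Option L)), (i₂, (none : Option L))}), ω ij = 0) →
      (∀ j : Option L, ∑ i, ω (i, j) • p i = 0) →
      (∀ i, ∑ j : Option L, ω (i, j) • (j.elim m l) = 0) →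
      ω = 0 := by
  classical
  intro ω hsupp hcol hrow
  -- the stress on the new line vanishes
  have hsupp' : ∀ i, i ≠ i₁ → i ≠ i₂ → ω (i, none) = 0 := by
    intro i h1 h2
    apply hsupp
    intro h
    rcases h with ⟨q, _, hq⟩ | h
    · exact Option.some_ne_none _ (congrArg Prod.snd hq : (none : Option L) = some _).symm
    · rcases h with h | h
      · exact h1 (congrArg Prod.fst h)
      · exact h2 (congrArg Prod.fst h)
  have hsum : ω (i₁, none) • p i₁ + ω (i₂, none) • p i₂ = 0 := by
    have h := hcol none
    rwa [← Finset.sum_subset (Finset.subset_univ ({i₁, i₂} : Finset P))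
      (fun i _ hi => by
        simp only [Finset.mem_insert, Finset.mem_singleton, not_or] at hi
        rw [hsupp' i hi.1 hi.2, zero_smul]),
      Finset.sum_pair hne] at h
  have hba : ω (i₂, none) = -ω (i₁, none) := by
    have hd : (ω (i₁, none) • p i₁ + ω (i₂, none) • p i₂) ⬝ᵥ m = 0 := by
      rw [hsum, zero_dotProduct]
    rw [add_dotProduct, smul_dotProduct, smul_dotProduct, hm1, hm2] at hd
    simp only [smul_eq_mul, mul_neg_one] at hd
    linarith
  have ha : ω (i₁, none) = 0 := by
    rw [hba] at hsum
    have : ω (i₁, none) • (p i₁ - p i₂) = 0 := by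
      rw [smul_sub, sub_eq_add_neg, ← neg_smul]; exact hsum
    rcases smul_eq_zero.mp this with h | h
    · exact h
    · exact absurd (sub_eq_zero.mp h) hpne
  have hnone : ∀ i, ω (i, none) = 0 := by
    intro i
    by_cases h1 : i = i₁
    · rw [h1]; exact ha
    by_cases h2 : i = i₂
    · rw [h2, hba, ha, neg_zero]
    · exact hsupp' i h1 h2
  -- the restricted stress is a self-stress of the original realization
  have hrest : (fun ij : P × L => ω (ij.1, some ij.2)) = 0 := by
    apply hindep
    · intro ij hij
      apply hsupp
      intro h
      rcases h with ⟨q, hq, hq'⟩ | h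
      · apply hij
        obtain ⟨h1, h2⟩ := Prod.mk.injEq .. ▸ hq'
        have h2' : ij.2 = q.2 := Option.some.inj h2
        rw [show ij = q from Prod.ext h1 h2']
        exact hq
      · rcases h with h | h <;> exact Option.some_ne_none _ (congrArg Prod.snd (h : (ij.1, some ij.2) = _) : some ij.2 = (none : Option L))
    · intro j
      exact hcol (some j)
    · intro i
      have h := hrow i
      rw [Fintype.sum_option, hnone i, zero_smul, zero_add] at h
      exact h
  funext ij
  obtain ⟨i, j⟩ := ij
  cases j with
  | none => exact hnone i
  | some j => exact congrFun hrest (i, j)
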